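/- For all nonzero integers m and all nonnegative integers n, the sum over k from 0 to n of ((64-m)k^3 - 32k^2 - 16k + 8) * C(2k,k)^3 / ((2k-1)^2 * m^k) equals 8(2n+1) * C(2n,n)^3 / m^n. -/

import Mathlib

theorem stmt_1 (m : ℤ) (hm : m ≠ 0) (n : ℕ) :
    ∑ k ∈ Finset.range (n + 1),
      (((64 - (m : ℚ)) * k ^ 3 - 32 * k ^ 2 - 16 * k + 8) * ((2 * k).choose k : ℚ) ^ 3) /
        ((2 * (k : ℚ) - 1) ^ 2 * (m : ℚ) ^ k)
      = 8 * (2 * (n : ℚ) + 1) * ((2 * n).choose n : ℚ) ^ 3 / (m : ℚ) ^ n := by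
  have hmq : (m : ℚ) ≠ 0 := Int.cast_ne_zero.mpr hm
  induction n with
  | zero => norm_num
  | succ n ih =>
    rw [Finset.sum_range_succ, ih]
    have hb : ((n : ℚ) + 1) * ((2 * (n + 1)).choose (n + 1) : ℚ)
        = 2 * (2 * n + 1) * ((2 * n).choose n : ℚ) := by
      have := Nat.succ_mul_centralBinom_succ n
      have h2 : (((n + 1) * Nat.centralBinom (n + 1) : ℕ) : ℚ)
          = ((2 * (2 * n + 1) * Nat.centralBinom n : ℕ) : ℚ) := by rw [this]
      push_cast [Nat.centralBinom] at h2
      linarith [h2]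
    set a : ℚ := ((2 * n).choose n : ℚ)
    set b : ℚ := ((2 * (n + 1)).choose (n + 1) : ℚ)
    have h3 : ((n : ℚ) + 1) ^ 3 * b ^ 3 = 8 * (2 * n + 1) ^ 3 * a ^ 3 := by
      linear_combination (((n : ℚ) + 1) ^ 2 * b ^ 2 + ((n : ℚ) + 1) * b * 2 * (2 * n + 1) * a
        + 4 * (2 * n + 1) ^ 2 * a ^ 2) * hb
    have hn1 : ((n : ℚ) + 1) ≠ 0 := by positivity
    have hd : (2 * ((n : ℚ) + 1) - 1) ≠ 0 := by
      have h0 : (0 : ℚ) ≤ (n : ℚ) := Nat.cast_nonneg n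
      intro h; linarith
    push_cast
    field_simp
    linear_combination (-(m:ℚ) * (m:ℚ)^n) * h3
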